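/- arXiv:1805.04148 — 2 statements merged into one kernel-verified Lean document; each statement's English description precedes it below -/
import Mathlib

section
/- Let (m_k)_{1≤k≤n} be positive integers with m_{k+1}/m_k ≥ 2 for all k. Then the Walsh functions W_{m_1}, …, W_{m_n}, viewed as random variables on [0,1] with Lebesgue measure, are mutually independent, each taking values ±1 with probability 1/2. -/
open MeasureTheory ProbabilityTheory

/-- The base Rademacher function: `1` on `[0, 1/2)`, `-1` on `[1/2, 1)`, extended 1-periodically. -/
noncomputable def r0 (x : ℝ) : ℝ := if Int.fract x < 1 / 2 then 1 else -1

/-- The `n`-th Rademacher function `r_n(x) = r_0(2^n x)`. -/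
noncomputable def rademacher (n : ℕ) (x : ℝ) : ℝ := r0 (2 ^ n * x)

/-- The `n`-th Walsh function `W_n(x) = ∏_i r_i(x)^{k_i}` where `n = ∑ k_i 2^i`. -/
noncomputable def walsh (n : ℕ) (x : ℝ) : ℝ :=
  ∏ i ∈ Finset.range (n + 1), if n.testBit i then rademacher i x else 1

lemma r0_values (x : ℝ) : r0 x = 1 ∨ r0 x = -1 := by unfold r0; split <;> simp

lemma measurable_r0 : Measurable r0 :=
  Measurable.ite (measurableSet_lt measurable_fract measurable_const)
    measurable_const measurable_const

lemma measurable_rademacher (i : ℕ) : Measurable (rademacher i) :=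
  measurable_r0.comp (measurable_const_mul _)

lemma rademacher_values (i : ℕ) (x : ℝ) : rademacher i x = 1 ∨ rademacher i x = -1 :=
  r0_values _

lemma rademacher_sq (i : ℕ) (x : ℝ) : rademacher i x * rademacher i x = 1 := by
  rcases rademacher_values i x with h | h <;> rw [h] <;> norm_num

lemma measurable_walsh (n : ℕ) : Measurable (walsh n) := by
  unfold walsh
  exact Finset.measurable_prod _ fun i _ => by
    split
    · exact measurable_rademacher i
    · exact measurable_const

lemma walsh_values (n : ℕ) (x : ℝ) : walsh n x = 1 ∨ walsh n x = -1 := by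
  unfold walsh
  refine Finset.prod_induction _ (fun y => y = 1 ∨ y = -1) ?_ (Or.inl rfl) ?_
  · rintro a b (ha | ha) (hb | hb) <;> simp [ha, hb]
  · intro i _
    split
    · exact rademacher_values i x
    · exact Or.inl rfl

lemma walsh_abs_le (n : ℕ) (x : ℝ) : |walsh n x| ≤ 1 := by
  rcases walsh_values n x with h | h <;> rw [h] <;> norm_num

lemma walsh_zero (x : ℝ) : walsh 0 x = 1 := by simp [walsh, Nat.zero_testBit]

lemma walsh_eq_prod (n N : ℕ) (h : n + 1 ≤ N) (x : ℝ) :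
    walsh n x = ∏ i ∈ Finset.range N, if n.testBit i then rademacher i x else 1 := by
  unfold walsh
  refine Finset.prod_subset (Finset.range_subset_range.2 h) ?_
  intro i hi hni
  have hlt : n < 2 ^ i := by
    have h1 : n < 2 ^ (n + 1) := (Nat.lt_two_pow_self (n := n)).trans_le (Nat.pow_le_pow_right (by norm_num) (Nat.le_succ n))
    exact h1.trans_le (Nat.pow_le_pow_right (by norm_num) (by simpa [Finset.mem_range, not_lt] using hni))
  simp [Nat.testBit_lt_two_pow hlt]

lemma walsh_mul (a b : ℕ) (x : ℝ) : walsh a x * walsh b x = walsh (a ^^^ b) x := by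
  set N := max (a + 1) (max (b + 1) ((a ^^^ b) + 1)) with hN
  rw [walsh_eq_prod a N (le_max_left _ _) x,
    walsh_eq_prod b N ((le_max_left _ _).trans (le_max_right _ _)) x,
    walsh_eq_prod (a ^^^ b) N ((le_max_right _ _).trans (le_max_right _ _)) x,
    ← Finset.prod_mul_distrib]
  refine Finset.prod_congr rfl fun i _ => ?_
  rw [Nat.testBit_xor]
  cases ha : a.testBit i <;> cases hb : b.testBit i <;>
    simp [rademacher_sq i x]

lemma walsh_add_one (n : ℕ) (x : ℝ) : walsh n (x + 1) = walsh n x := by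
  unfold walsh
  refine Finset.prod_congr rfl fun i _ => ?_
  have : rademacher i (x + 1) = rademacher i x := by
    unfold rademacher r0
    rw [mul_add, mul_one]
    have h2 : (2 : ℝ) ^ i = ((2 ^ i : ℕ) : ℝ) := by push_cast; ring
    rw [h2, Int.fract_add_natCast]
  rw [this]

lemma walsh_decomp (n : ℕ) (hn : n ≠ 0) (x : ℝ) :
    walsh n x = (if n.testBit 0 then r0 x else 1) * walsh (n / 2) (2 * x) := by
  have key : ∀ i : ℕ, (if n.testBit (i + 1) then rademacher (i + 1) x else 1)
      = (if (n / 2).testBit i then rademacher i (2 * x) else 1) := by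
    intro i
    have hr : rademacher (i + 1) x = rademacher i (2 * x) := by
      unfold rademacher; congr 1; ring
    rw [Nat.testBit_succ, hr]
  have h0 : rademacher 0 x = r0 x := by unfold rademacher; norm_num
  rw [walsh_eq_prod (n / 2) n (by omega) (2 * x)]
  unfold walsh
  rw [Finset.prod_range_succ' (fun i => if n.testBit i then rademacher i x else 1) n,
    mul_comm, h0]
  congr 1
  exact Finset.prod_congr rfl fun i _ => key i

lemma bddIntervalIntegrable {f : ℝ → ℝ} (hf : Measurable f) (hb : ∀ x, |f x| ≤ 1)
    (a b : ℝ) : IntervalIntegrable f volume a b := by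
  have : ∀ c d : ℝ, IntegrableOn f (Set.Ioc c d) volume := by
    intro c d
    haveI : IsFiniteMeasure (volume.restrict (Set.Ioc c d)) :=
      ⟨by rw [Measure.restrict_apply_univ, Real.volume_Ioc]; exact ENNReal.ofReal_lt_top⟩
    exact (integrable_const 1).mono' hf.aestronglyMeasurable
      (Filter.Eventually.of_forall fun x => by simpa [Real.norm_eq_abs] using hb x)
  exact ⟨this a b, this b a⟩

lemma walsh_intervalIntegrable (n : ℕ) (a b : ℝ) :
    IntervalIntegrable (walsh n) volume a b :=
  bddIntervalIntegrable (measurable_walsh n) (walsh_abs_le n) a b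

lemma integral_walsh_half (k : ℕ) :
    ∫ x in (0:ℝ)..(1/2), walsh k (2 * x) = (1/2) * ∫ x in (0:ℝ)..1, walsh k x := by
  rw [intervalIntegral.integral_comp_mul_left (walsh k) (by norm_num : (2:ℝ) ≠ 0)]
  norm_num

lemma integral_walsh_half' (k : ℕ) :
    ∫ x in (1/2:ℝ)..1, walsh k (2 * x) = (1/2) * ∫ x in (0:ℝ)..1, walsh k x := by
  rw [intervalIntegral.integral_comp_mul_left (walsh k) (by norm_num : (2:ℝ) ≠ 0)]
  have h12 : ∫ x in (1:ℝ)..2, walsh k x = ∫ x in (0:ℝ)..1, walsh k x := by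
    have := intervalIntegral.integral_comp_add_right (f := walsh k) (a := (0:ℝ)) (b := 1) 1
    simp only [walsh_add_one, zero_add, one_add_one_eq_two] at this
    exact this.symm
  norm_num [h12]

lemma r0_eq_one {x : ℝ} (h0 : 0 ≤ x) (h1 : x < 1/2) : r0 x = 1 := by
  unfold r0
  rw [Int.fract_eq_self.2 ⟨h0, by linarith⟩, if_pos h1]

lemma r0_eq_neg_one {x : ℝ} (h0 : 1/2 ≤ x) (h1 : x < 1) : r0 x = -1 := by
  unfold r0
  rw [Int.fract_eq_self.2 ⟨by linarith, h1⟩, if_neg (not_lt.2 h0)]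

lemma integral_walsh (n : ℕ) (hn : n ≠ 0) : ∫ x in (0:ℝ)..1, walsh n x = 0 := by
  induction n using Nat.strong_induction_on with
  | _ n ih =>
  have h2 : IntervalIntegrable (fun x => walsh (n / 2) (2 * x)) volume 0 (1/2) :=
    bddIntervalIntegrable ((measurable_walsh _).comp (measurable_const_mul 2))
      (fun x => walsh_abs_le _ _) _ _
  have h3 : IntervalIntegrable (fun x => walsh (n / 2) (2 * x)) volume (1/2) 1 :=
    bddIntervalIntegrable ((measurable_walsh _).comp (measurable_const_mul 2))
      (fun x => walsh_abs_le _ _) _ _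
  by_cases hb : n.testBit 0
  · -- odd case: integral vanishes directly
    have hcongr : ∫ x in (0:ℝ)..1, walsh n x =
        (∫ x in (0:ℝ)..(1/2), walsh (n / 2) (2 * x)) -
        (∫ x in (1/2:ℝ)..1, walsh (n / 2) (2 * x)) := by
      rw [← intervalIntegral.integral_add_adjacent_intervals
        (walsh_intervalIntegrable n 0 (1/2)) (walsh_intervalIntegrable n (1/2) 1)]
      have e1 : ∫ x in (0:ℝ)..(1/2), walsh n x =
          ∫ x in (0:ℝ)..(1/2), walsh (n / 2) (2 * x) := by
        apply intervalIntegral.integral_congr_ae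
        have hne : ∀ᵐ x : ℝ, x ≠ (1/2 : ℝ) := by
          rw [ae_iff]
          simpa using measure_singleton (1/2 : ℝ)
        filter_upwards [hne] with x hx hmem
        rw [Set.uIoc_of_le (by norm_num : (0:ℝ) ≤ 1/2)] at hmem
        have hx2 : x < 1/2 := lt_of_le_of_ne hmem.2 hx
        rw [walsh_decomp n hn x, if_pos hb, r0_eq_one hmem.1.le hx2, one_mul]
      have e2 : ∫ x in (1/2:ℝ)..1, walsh n x =
          ∫ x in (1/2:ℝ)..1, (- walsh (n / 2) (2 * x)) := by
        apply intervalIntegral.integral_congr_ae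
        have hne : ∀ᵐ x : ℝ, x ≠ (1 : ℝ) := by
          rw [ae_iff]
          simpa using measure_singleton (1 : ℝ)
        filter_upwards [hne] with x hx hmem
        rw [Set.uIoc_of_le (by norm_num : (1/2:ℝ) ≤ 1)] at hmem
        have hx2 : x < 1 := lt_of_le_of_ne hmem.2 hx
        rw [walsh_decomp n hn x, if_pos hb, r0_eq_neg_one hmem.1.le hx2]
        ring
      rw [e1, e2, intervalIntegral.integral_neg]
      ring
    rw [hcongr, integral_walsh_half, integral_walsh_half']
    ring
  · -- even case: n = 2 * (n/2) with n/2 ≠ 0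
    have hhalf : n / 2 ≠ 0 := by
      have : n % 2 = 0 := by
        have := Nat.testBit_zero n
        simp [hb] at this ⊢
        omega
      omega
    have hcongr : ∫ x in (0:ℝ)..1, walsh n x =
        (∫ x in (0:ℝ)..(1/2), walsh (n / 2) (2 * x)) +
        (∫ x in (1/2:ℝ)..1, walsh (n / 2) (2 * x)) := by
      rw [← intervalIntegral.integral_add_adjacent_intervals
        (walsh_intervalIntegrable n 0 (1/2)) (walsh_intervalIntegrable n (1/2) 1)]
      congr 1 <;>
      · apply intervalIntegral.integral_congr
        intro x _
        rw [walsh_decomp n hn x, if_neg hb, one_mul]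
    rw [hcongr, integral_walsh_half, integral_walsh_half',
      ih (n / 2) (by omega) hhalf]
    ring

open scoped ENNReal

noncomputable def fXor {α : Type*} (M : α → ℕ) (T : Finset α) : ℕ := T.fold (· ^^^ ·) 0 M

lemma fXor_empty {α : Type*} (M : α → ℕ) : fXor M ∅ = 0 := rfl

lemma fXor_insert {α : Type*} [DecidableEq α] {M : α → ℕ} {T : Finset α} {a : α}
    (h : a ∉ T) : fXor M (insert a T) = M a ^^^ fXor M T := Finset.fold_insert h

lemma prod_walsh {α : Type*} [DecidableEq α] (M : α → ℕ) (T : Finset α) (x : ℝ) :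
    ∏ i ∈ T, walsh (M i) x = walsh (fXor M T) x := by
  induction T using Finset.induction_on with
  | empty => simp [fXor_empty, walsh_zero]
  | @insert a T ha ih =>
    rw [Finset.prod_insert ha, ih, walsh_mul, fXor_insert ha]

lemma fXor_lt {α : Type*} [DecidableEq α] (M : α → ℕ) (T : Finset α) (j : ℕ)
    (h : ∀ i ∈ T, M i < 2 ^ j) : fXor M T < 2 ^ j := by
  induction T using Finset.induction_on with
  | empty => rw [fXor_empty]; exact Nat.pow_pos (by norm_num)
  | @insert a T ha ih =>
    rw [fXor_insert ha]
    exact Nat.xor_lt_two_pow (h a (Finset.mem_insert_self a T))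
      (ih fun i hi => h i (Finset.mem_insert_of_mem hi))

lemma testBit_log2 {v : ℕ} (hv : v ≠ 0) : v.testBit (Nat.log 2 v) = true := by
  have h1 : 2 ^ Nat.log 2 v ≤ v := Nat.pow_log_le_self 2 hv
  have h2 : v < 2 ^ (Nat.log 2 v + 1) := Nat.lt_pow_succ_log_self (by norm_num) v
  rw [pow_succ] at h2
  have hd : v / 2 ^ Nat.log 2 v = 1 :=
    Nat.div_eq_of_lt_le (by omega) (by omega)
  rw [Nat.testBit_eq_decide_div_mod_eq, hd]
  decide

lemma fXor_ne_zero {α : Type*} [DecidableEq α] [LinearOrder α] (M : α → ℕ)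
    (T : Finset α) (hT : T.Nonempty)
    (hpos : 0 < M (T.max' hT))
    (hdom : ∀ i ∈ T, i ≠ T.max' hT → 2 * M i ≤ M (T.max' hT)) :
    fXor M T ≠ 0 := by
  set a := T.max' hT with ha
  have haT : a ∈ T := T.max'_mem hT
  set j := Nat.log 2 (M a) with hj
  have hXa : (M a).testBit j = true := testBit_log2 hpos.ne'
  have hmaj : M a < 2 ^ (j + 1) := Nat.lt_pow_succ_log_self (by norm_num) _
  rw [pow_succ] at hmaj
  have hrest : fXor M (T.erase a) < 2 ^ j := by
    apply fXor_lt
    intro i hi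
    have h2 : 2 * M i ≤ M a :=
      hdom i (Finset.mem_of_mem_erase hi) (Finset.ne_of_mem_erase hi)
    omega
  have hsplit : fXor M T = M a ^^^ fXor M (T.erase a) := by
    rw [← fXor_insert (Finset.notMem_erase a T), Finset.insert_erase haT]
  have hbit : (fXor M T).testBit j = true := by
    rw [hsplit, Nat.testBit_xor, hXa, Nat.testBit_lt_two_pow hrest]
    rfl
  intro h0
  rw [h0, Nat.zero_testBit] at hbit
  exact Bool.noConfusion hbit

instance : IsProbabilityMeasure ((volume : Measure ℝ).restrict (Set.Icc 0 1)) :=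
  ⟨by rw [Measure.restrict_apply_univ, Real.volume_Icc]; norm_num⟩

lemma setIntegral_walsh (k : ℕ) :
    ∫ x in Set.Icc (0:ℝ) 1, walsh k x = if k = 0 then 1 else 0 := by
  rw [MeasureTheory.integral_Icc_eq_integral_Ioc,
    ← intervalIntegral.integral_of_le (by norm_num : (0:ℝ) ≤ 1)]
  by_cases h : k = 0
  · subst h
    simp [walsh_zero]
  · rw [if_neg h]
    exact integral_walsh k h

lemma integrableOn_Icc_of_bdd {f : ℝ → ℝ} (hf : Measurable f) (C : ℝ)
    (hb : ∀ x, |f x| ≤ C) : IntegrableOn f (Set.Icc (0:ℝ) 1) volume :=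
  (integrable_const C).mono' hf.aestronglyMeasurable
    (Filter.Eventually.of_forall fun x => by simpa [Real.norm_eq_abs] using hb x)

lemma key_measure {n : ℕ} (M : Fin n → ℕ)
    (hx : ∀ T : Finset (Fin n), T.Nonempty → fXor M T ≠ 0)
    (S : Finset (Fin n)) (ε : Fin n → ℝ) (hε : ∀ i, ε i = 1 ∨ ε i = -1) :
    (volume : Measure ℝ).restrict (Set.Icc 0 1) (⋂ i ∈ S, {x : ℝ | walsh (M i) x = ε i})
      = (1 / 2 : ℝ≥0∞) ^ S.card := by
  classical
  set μ := (volume : Measure ℝ).restrict (Set.Icc 0 1) with hμdef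
  have hE : ∀ i : Fin n, MeasurableSet {x : ℝ | walsh (M i) x = ε i} := fun i =>
    measurable_walsh (M i) (measurableSet_singleton (ε i))
  have hInter : MeasurableSet (⋂ i ∈ S, {x : ℝ | walsh (M i) x = ε i}) :=
    Finset.measurableSet_biInter S fun i _ => hE i
  -- pointwise identity with a product
  have hpoint : ∀ x : ℝ,
      Set.indicator (⋂ i ∈ S, {x : ℝ | walsh (M i) x = ε i}) (1 : ℝ → ℝ) x
        = ∏ i ∈ S, ((1 + ε i * walsh (M i) x) / 2) := by
    intro x
    by_cases hxm : x ∈ ⋂ i ∈ S, {x : ℝ | walsh (M i) x = ε i}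
    · rw [Set.indicator_of_mem hxm, Pi.one_apply]
      symm
      apply Finset.prod_eq_one
      intro i hi
      have hwx : walsh (M i) x = ε i := by
        have := Set.mem_iInter₂.1 hxm i hi
        simpa using this
      rw [hwx]
      rcases hε i with h | h <;> rw [h] <;> norm_num
    · rw [Set.indicator_of_notMem hxm]
      symm
      simp only [Set.mem_iInter, Set.mem_setOf_eq, not_forall] at hxm
      obtain ⟨i, hi, hne⟩ := hxm
      apply Finset.prod_eq_zero hi
      rcases hε i with h | h <;> rcases walsh_values (M i) x with h2 | h2 <;>
        rw [h] at hne ⊢ <;> rw [h2] at hne ⊢ <;>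
        first
          | exact absurd rfl hne
          | norm_num
  -- expansion of the product
  have hprod : ∀ x : ℝ, (∏ i ∈ S, ((1 + ε i * walsh (M i) x) / 2))
      = (1 / 2 : ℝ) ^ S.card *
        ∑ T ∈ S.powerset, (∏ i ∈ T, ε i) * walsh (fXor M T) x := by
    intro x
    have e1 : ∏ i ∈ S, ((1 + ε i * walsh (M i) x) / 2)
        = (∏ i ∈ S, (ε i * walsh (M i) x + 1)) / 2 ^ S.card := by
      rw [Finset.prod_div_distrib, Finset.prod_const]
      congr 1
      exact Finset.prod_congr rfl fun i _ => by ring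
    rw [e1, Finset.prod_add]
    have e2 : ∀ T ∈ S.powerset, (∏ i ∈ T, ε i * walsh (M i) x) * ∏ _i ∈ S \ T, (1:ℝ)
        = (∏ i ∈ T, ε i) * walsh (fXor M T) x := by
      intro T _
      rw [Finset.prod_const_one, mul_one, Finset.prod_mul_distrib, prod_walsh]
    rw [Finset.sum_congr rfl e2]
    rw [one_div, inv_pow, div_eq_mul_inv, mul_comm]
  -- integrability of the summands
  have hint : ∀ T ∈ S.powerset,
      Integrable (fun x => (∏ i ∈ T, ε i) * walsh (fXor M T) x) μ := by
    intro T _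
    refine integrableOn_Icc_of_bdd (((measurable_walsh (fXor M T)).const_mul _))
      (|∏ i ∈ T, ε i|) (fun x => ?_)
    rw [abs_mul]
    exact mul_le_of_le_one_right (abs_nonneg _) (walsh_abs_le _ x)
  -- the integral computation
  have hreal : (μ (⋂ i ∈ S, {x : ℝ | walsh (M i) x = ε i})).toReal
      = (1 / 2 : ℝ) ^ S.card := by
    change μ.real _ = _
    rw [← MeasureTheory.integral_indicator_one hInter,
      MeasureTheory.integral_congr_ae (Filter.Eventually.of_forall hpoint),
      MeasureTheory.integral_congr_ae (Filter.Eventually.of_forall hprod),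
      integral_const_mul, MeasureTheory.integral_finset_sum _ hint]
    rw [Finset.sum_eq_single_of_mem ∅ (Finset.empty_mem_powerset S) ?side]
    · rw [integral_const_mul]
      have h0 : ∫ x, walsh (fXor M ∅) x ∂μ = 1 := by
        rw [fXor_empty]
        have := setIntegral_walsh 0
        rw [if_pos rfl] at this
        exact this
      rw [h0]
      simp
    · intro T hT hTne
      have hz : ∫ x, walsh (fXor M T) x ∂μ = 0 := by
        have := setIntegral_walsh (fXor M T)
        rw [if_neg (hx T (Finset.nonempty_iff_ne_empty.2 hTne))] at this
        exact this
      rw [integral_const_mul, hz, mul_zero]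
  have hne1 : μ (⋂ i ∈ S, {x : ℝ | walsh (M i) x = ε i}) ≠ ⊤ := measure_ne_top μ _
  have hne2 : ((1 / 2 : ℝ≥0∞) ^ S.card) ≠ ⊤ := by
    simp
  refine (ENNReal.toReal_eq_toReal_iff' hne1 hne2).1 ?_
  rw [hreal, ENNReal.toReal_pow]
  norm_num


/-- If `m 1, …, m n` are positive integers with `m (k+1) / m k ≥ 2`, then the
Walsh functions `W_{m 1}, …, W_{m n}`, viewed as random variables on `[0,1]` with Lebesgue
measure, are mutually independent, each taking the values `1` and `-1` with probability `1/2`. -/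
theorem walsh_iIndepFun (n : ℕ) (m : ℕ → ℕ)
    (hpos : ∀ k, 1 ≤ k → k ≤ n → 0 < m k)
    (hlac : ∀ k, 1 ≤ k → k + 1 ≤ n → (m (k + 1) : ℝ) / (m k : ℝ) ≥ 2) :
    iIndepFun
      (fun i : Fin n => walsh (m (i.1 + 1)))
      ((volume : Measure ℝ).restrict (Set.Icc 0 1)) ∧
    ∀ i : Fin n,
      ((volume : Measure ℝ).restrict (Set.Icc 0 1)) {x | walsh (m (i.1 + 1)) x = 1} = 1 / 2 ∧
      ((volume : Measure ℝ).restrict (Set.Icc 0 1)) {x | walsh (m (i.1 + 1)) x = -1} = 1 / 2 := by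
  classical
  set μ := (volume : Measure ℝ).restrict (Set.Icc 0 1) with hμdef
  set M : Fin n → ℕ := fun i => m (i.1 + 1) with hM
  -- the doubling chain
  have step : ∀ k, 1 ≤ k → k + 1 ≤ n → 2 * m k ≤ m (k + 1) := by
    intro k hk hk1
    have hmk : 0 < m k := hpos k hk (by omega)
    have h := hlac k hk hk1
    have hmkR : (0:ℝ) < (m k : ℝ) := by exact_mod_cast hmk
    rw [ge_iff_le, le_div_iff₀ hmkR] at h
    exact_mod_cast h
  have chain : ∀ b a, 1 ≤ a → a < b → b ≤ n → 2 * m a ≤ m b := by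
    intro b
    induction b with
    | zero => omega
    | succ b ih =>
      intro a ha hab hbn
      rcases Nat.lt_succ_iff_lt_or_eq.1 hab with h | h
      · have h1 := ih a ha h (by omega)
        have h2 := step b (by omega) hbn
        omega
      · subst h
        exact step a ha hbn
  -- XOR of any nonempty subfamily is nonzero
  have hx : ∀ T : Finset (Fin n), T.Nonempty → fXor M T ≠ 0 := by
    intro T hT
    apply fXor_ne_zero M T hT
    · exact hpos _ (by omega) (by omega)
    · intro i hi hine
      have hle : i ≤ T.max' hT := Finset.le_max' T i hi
      have hlt : i < T.max' hT := lt_of_le_of_ne hle hine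
      exact chain ((T.max' hT).1 + 1) (i.1 + 1) (by omega) (by omega) (by omega)
  -- measure of a single level set
  have hhalf : ∀ (i : Fin n) (c : ℝ), c = 1 ∨ c = -1 →
      μ {x : ℝ | walsh (M i) x = c} = 1 / 2 := by
    intro i c hc
    have := key_measure M hx {i} (fun _ => c) (fun _ => hc)
    simpa only [Finset.set_biInter_singleton, Finset.card_singleton, pow_one] using this
  constructor
  · rw [ProbabilityTheory.iIndepFun_iff_measure_inter_preimage_eq_mul]
    intro S sets H
    by_cases hbad : ∃ i ∈ S, (1:ℝ) ∉ sets i ∧ (-1:ℝ) ∉ sets i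
    · obtain ⟨i, hiS, h1, h2⟩ := hbad
      have hempty : walsh (M i) ⁻¹' sets i = ∅ := by
        ext x
        simp only [Set.mem_preimage, Set.mem_empty_iff_false, iff_false]
        intro hmem
        rcases walsh_values (M i) x with h | h <;> rw [h] at hmem
        · exact h1 hmem
        · exact h2 hmem
      have hL : μ (⋂ j ∈ S, walsh (M j) ⁻¹' sets j) = 0 := by
        have hsub : (⋂ j ∈ S, walsh (M j) ⁻¹' sets j) ⊆ walsh (M i) ⁻¹' sets i :=
          Set.biInter_subset_of_mem hiS
        rw [hempty] at hsub
        exact le_antisymm ((measure_mono hsub).trans (by simp)) zero_le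
      rw [hL, Finset.prod_eq_zero hiS (by rw [hempty, measure_empty])]
    · push_neg at hbad
      have hgood : ∀ i ∈ S, (1:ℝ) ∈ sets i ∨ (-1:ℝ) ∈ sets i := by
        intro i hi
        by_contra hcon
        push_neg at hcon
        exact hcon.2 (hbad i hi hcon.1)
      set p : Fin n → Prop := fun i => ¬((1:ℝ) ∈ sets i ∧ (-1:ℝ) ∈ sets i) with hp
      set ε : Fin n → ℝ := fun i => if (1:ℝ) ∈ sets i then 1 else -1 with hεdef
      have hε : ∀ i, ε i = 1 ∨ ε i = -1 := by
        intro i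
        by_cases h : (1:ℝ) ∈ sets i <;> simp [hεdef, h]
      have hsetS' : ∀ i ∈ S, p i →
          walsh (M i) ⁻¹' sets i = {x : ℝ | walsh (M i) x = ε i} := by
        intro i hiS hpi
        ext x
        simp only [Set.mem_preimage, Set.mem_setOf_eq]
        by_cases h1 : (1:ℝ) ∈ sets i
        · have h2 : (-1:ℝ) ∉ sets i := fun h => hpi ⟨h1, h⟩
          rw [hεdef]
          simp only [if_pos h1]
          constructor
          · intro hm
            rcases walsh_values (M i) x with h | h
            · exact h
            · rw [h] at hm; exact absurd hm h2
          · intro hw; rw [hw]; exact h1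
        · have h2 : (-1:ℝ) ∈ sets i := (hgood i hiS).resolve_left h1
          rw [hεdef]
          simp only [if_neg h1]
          constructor
          · intro hm
            rcases walsh_values (M i) x with h | h
            · rw [h] at hm; exact absurd hm h1
            · exact h
          · intro hw; rw [hw]; exact h2
      have hsetU : ∀ i ∈ S, ¬ p i → walsh (M i) ⁻¹' sets i = Set.univ := by
        intro i _ hpi
        rw [hp, not_not] at hpi
        ext x
        simp only [Set.mem_preimage, Set.mem_univ, iff_true]
        rcases walsh_values (M i) x with h | h <;> rw [h]
        · exact hpi.1
        · exact hpi.2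
      have hInt : (⋂ i ∈ S, walsh (M i) ⁻¹' sets i)
          = ⋂ i ∈ S.filter p, {x : ℝ | walsh (M i) x = ε i} := by
        ext x
        constructor
        · intro h
          rw [Set.mem_iInter₂] at h ⊢
          intro i hi
          rw [Finset.mem_filter] at hi
          rw [← hsetS' i hi.1 hi.2]
          exact h i hi.1
        · intro h
          rw [Set.mem_iInter₂] at h ⊢
          intro i hi
          by_cases hpi : p i
          · rw [hsetS' i hi hpi]
            exact h i (Finset.mem_filter.2 ⟨hi, hpi⟩)
          · rw [hsetU i hi hpi]
            trivial
      have hL : μ (⋂ i ∈ S, walsh (M i) ⁻¹' sets i) = (1/2 : ℝ≥0∞) ^ (S.filter p).card := by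
        rw [hInt]
        exact key_measure M hx (S.filter p) ε hε
      have hR : ∏ i ∈ S, μ (walsh (M i) ⁻¹' sets i) = (1/2 : ℝ≥0∞) ^ (S.filter p).card := by
        rw [← Finset.prod_filter_mul_prod_filter_not S p]
        have hA : ∏ i ∈ S.filter p, μ (walsh (M i) ⁻¹' sets i)
            = (1/2 : ℝ≥0∞) ^ (S.filter p).card := by
          rw [Finset.prod_congr rfl (fun i hi => ?_), Finset.prod_const]
          rw [Finset.mem_filter] at hi
          rw [hsetS' i hi.1 hi.2, hhalf i (ε i) (hε i)]
        have hB : ∏ i ∈ S.filter (fun i => ¬ p i), μ (walsh (M i) ⁻¹' sets i) = 1 := by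
          apply Finset.prod_eq_one
          intro i hi
          rw [Finset.mem_filter] at hi
          rw [hsetU i hi.1 hi.2]
          simp [hμdef]
        rw [hA, hB, mul_one]
      rw [hL, hR]
  · intro i
    exact ⟨hhalf i 1 (Or.inl rfl), hhalf i (-1) (Or.inr rfl)⟩
end

section
/- Let q > 1 and let (m_k) be a sequence of positive integers with m_{k+1}/m_k ≥ q. Fix l ≥ 2 and A ∈ ℤ. If 1 ≤ k_l < ⋯ < k_1 and m_{k_1} ± m_{k_2} ± ⋯ ± m_{k_l} = A for some choice of signs, and additionally m_{k_1}/m_{k_2} > l, then m_{k_1}/l < A < 2 m_{k_1}; consequently, the number of possible values of m_{k_1} among solutions with m_{k_1}/m_{k_2} > l is at most log_q(2l) + 1. -/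
/-- For a lacunary sequence with ratio `q > 1`, `l ≥ 2` and `A ∈ ℤ`: any signed-sum
solution `m (k 0) ± m (k 1) ± ⋯ ± m (k (l-1)) = A` (leading sign `+1`, decreasing indices) with
`m (k 0) / m (k 1) > l` satisfies `m (k 0) / l < A < 2 · m (k 0)`; consequently the set of
possible values of `m (k 0)` among such solutions is finite with at most `log_q (2l) + 1`
elements. -/
theorem solution_leading_term_bounds (q : ℝ) (hq : 1 < q) (m : ℕ → ℕ)
    (hpos : ∀ k, 1 ≤ k → 0 < m k)
    (hlac : ∀ k, 1 ≤ k → (m (k + 1) : ℝ) / (m k : ℝ) ≥ q)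
    (l : ℕ) (hl : 2 ≤ l) (A : ℤ) :
    (∀ (k : ℕ → ℕ) (ε : ℕ → ℤ),
      (∀ i j, i < j → j < l → k j < k i) → (∀ i, i < l → 1 ≤ k i) →
      (∀ i, i < l → ε i = 1 ∨ ε i = -1) → ε 0 = 1 →
      (∑ i ∈ Finset.range l, ε i * (m (k i) : ℤ)) = A →
      (l : ℝ) * (m (k 1) : ℝ) < (m (k 0) : ℝ) →
      ((m (k 0) : ℝ) / l < (A : ℝ) ∧ (A : ℝ) < 2 * (m (k 0) : ℝ))) ∧
    (∃ S : Finset ℕ,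
      (∀ (k : ℕ → ℕ) (ε : ℕ → ℤ),
        (∀ i j, i < j → j < l → k j < k i) → (∀ i, i < l → 1 ≤ k i) →
        (∀ i, i < l → ε i = 1 ∨ ε i = -1) → ε 0 = 1 →
        (∑ i ∈ Finset.range l, ε i * (m (k i) : ℤ)) = A →
        (l : ℝ) * (m (k 1) : ℝ) < (m (k 0) : ℝ) →
        m (k 0) ∈ S) ∧
      (S.card : ℝ) ≤ Real.logb q (2 * l) + 1) := by
  have hqpos : (0:ℝ) < q := lt_trans one_pos hq
  have hstep : ∀ c, 1 ≤ c → q * (m c : ℝ) ≤ m (c+1) := by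
    intro c hc
    have h1 := hlac c hc
    have h2 : (0:ℝ) < m c := by exact_mod_cast hpos c hc
    rw [ge_iff_le, le_div_iff₀ h2] at h1
    linarith
  have hpow : ∀ (j a : ℕ), 1 ≤ a → q ^ j * (m a : ℝ) ≤ m (a + j) := by
    intro j
    induction j with
    | zero => intro a ha; simp
    | succ j ih =>
      intro a ha
      have h1 := ih a ha
      have h2 := hstep (a+j) (le_trans ha (Nat.le_add_right _ _))
      calc q ^ (j+1) * (m a : ℝ) = q * (q ^ j * m a) := by ring
        _ ≤ q * m (a+j) := by nlinarith
        _ ≤ m (a + (j+1)) := by rw [← add_assoc]; exact h2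
  have hmono : ∀ a b, 1 ≤ a → a ≤ b → m a ≤ m b := by
    intro a b ha hab
    obtain ⟨j, rfl⟩ := Nat.exists_eq_add_of_le hab
    have h1 := hpow j a ha
    have h2 : (1:ℝ) ≤ q ^ j := one_le_pow₀ (le_of_lt hq)
    have h3 : (0:ℝ) ≤ (m a : ℝ) := Nat.cast_nonneg _
    have : (m a : ℝ) ≤ m (a + j) := le_trans (le_mul_of_one_le_left h3 h2) h1
    exact_mod_cast this
  have hlpos : (0:ℝ) < l := by positivity
  have hpart1 : ∀ (k : ℕ → ℕ) (ε : ℕ → ℤ),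
      (∀ i j, i < j → j < l → k j < k i) → (∀ i, i < l → 1 ≤ k i) →
      (∀ i, i < l → ε i = 1 ∨ ε i = -1) → ε 0 = 1 →
      (∑ i ∈ Finset.range l, ε i * (m (k i) : ℤ)) = A →
      (l : ℝ) * (m (k 1) : ℝ) < (m (k 0) : ℝ) →
      ((m (k 0) : ℝ) / l < (A : ℝ) ∧ (A : ℝ) < 2 * (m (k 0) : ℝ)) := by
    intro k ε hdec hk1 hε hε0 hsum hratio
    have h0l : 0 < l := by omega
    have hins : Finset.range l = insert 0 (Finset.Ico 1 l) := by
      ext x; simp [Finset.mem_Ico]; omega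
    rw [hins, Finset.sum_insert (by simp), hε0, one_mul] at hsum
    have habs : |∑ i ∈ Finset.Ico 1 l, ε i * (m (k i) : ℤ)| ≤ ((l : ℤ) - 1) * (m (k 1) : ℤ) := by
      calc |∑ i ∈ Finset.Ico 1 l, ε i * (m (k i) : ℤ)|
          ≤ ∑ i ∈ Finset.Ico 1 l, |ε i * (m (k i) : ℤ)| := Finset.abs_sum_le_sum_abs _ _
        _ ≤ ∑ _i ∈ Finset.Ico 1 l, (m (k 1) : ℤ) := by
            apply Finset.sum_le_sum
            intro i hi
            rw [Finset.mem_Ico] at hi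
            have h1 : |ε i * (m (k i) : ℤ)| = (m (k i) : ℤ) := by
              rcases hε i hi.2 with h | h <;> simp [h]
            rw [h1]
            have : m (k i) ≤ m (k 1) := by
              rcases eq_or_lt_of_le hi.1 with h | h
              · rw [← h]
              · exact hmono (k i) (k 1) (hk1 i hi.2) (le_of_lt (hdec 1 i h hi.2))
            exact_mod_cast this
        _ = ((l : ℤ) - 1) * (m (k 1) : ℤ) := by
            rw [Finset.sum_const, Nat.card_Ico, nsmul_eq_mul]
            push_cast [Nat.cast_sub (by omega : 1 ≤ l)]
            ring
    have hR : (A : ℝ) - (m (k 0) : ℝ) = ((∑ i ∈ Finset.Ico 1 l, ε i * (m (k i) : ℤ) : ℤ) : ℝ) := by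
      rw [← hsum]; push_cast; ring
    have habsR : |(A : ℝ) - (m (k 0) : ℝ)| ≤ ((l : ℝ) - 1) * (m (k 1) : ℝ) := by
      rw [hR, ← Int.cast_abs]
      exact_mod_cast habs
    rw [abs_le] at habsR
    have hM1 : (0:ℝ) ≤ (m (k 1) : ℝ) := Nat.cast_nonneg _
    have hl1 : (1:ℝ) ≤ (l:ℝ) - 1 := by
      have : (2:ℝ) ≤ l := by exact_mod_cast hl
      linarith
    constructor
    · rw [div_lt_iff₀ hlpos]
      nlinarith [mul_lt_mul_of_pos_left hratio (show (0:ℝ) < (l:ℝ) - 1 by linarith)]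
    · nlinarith
  refine ⟨hpart1, ?_⟩
  by_cases hA : 0 < A
  · -- A > 0 case
    have hAR : (0:ℝ) < (A : ℝ) := by exact_mod_cast hA
    obtain ⟨n, hn⟩ := pow_unbounded_of_one_lt ((l:ℝ) * A) hq
    set T : Finset ℕ := (Finset.range (n+1)).filter
      (fun j => 1 ≤ j ∧ (A:ℝ)/2 < m j ∧ (m j : ℝ) < l * A) with hT
    refine ⟨T.image m, ?_, ?_⟩
    · intro k ε hdec hk1 hε hε0 hsum hratio
      obtain ⟨hlo, hhi⟩ := hpart1 k ε hdec hk1 hε hε0 hsum hratio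
      have hk01 : 1 ≤ k 0 := hk1 0 (by omega)
      have hub : (m (k 0) : ℝ) < l * A := by
        rw [div_lt_iff₀ hlpos] at hlo; linarith
      have hlb : (A:ℝ)/2 < m (k 0) := by linarith
      have hk0n : k 0 < n + 1 := by
        by_contra hc
        push_neg at hc
        have h1 : q ^ (k 0 - 1) * (m 1 : ℝ) ≤ m (k 0) := by
          have := hpow (k 0 - 1) 1 le_rfl
          rwa [show 1 + (k 0 - 1) = k 0 by omega] at this
        have h2 : (1:ℝ) ≤ m 1 := by exact_mod_cast hpos 1 le_rfl
        have h3 : q ^ n ≤ q ^ (k 0 - 1) := pow_le_pow_right₀ (le_of_lt hq) (by omega)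
        nlinarith [pow_pos hqpos n, pow_pos hqpos (k 0 - 1)]
      exact Finset.mem_image_of_mem m (by
        rw [hT, Finset.mem_filter, Finset.mem_range]
        exact ⟨hk0n, hk01, hlb, hub⟩)
    · have hlogb0 : 0 ≤ Real.logb q (2 * l) := by
        apply Real.logb_nonneg hq
        have : (2:ℝ) ≤ l := by exact_mod_cast hl
        linarith
      by_cases hTe : T = ∅
      · simp [hTe]; linarith
      · have hTne : T.Nonempty := Finset.nonempty_iff_ne_empty.mpr hTe
        set k₀ := T.min' hTne with hk₀
        have hk₀T : k₀ ∈ T := T.min'_mem hTne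
        have hk₀1 : 1 ≤ k₀ := by
          rw [hT] at hk₀T; simp only [Finset.mem_filter] at hk₀T; exact hk₀T.2.1
        have hk₀lb : (A:ℝ)/2 < m k₀ := by
          rw [hT] at hk₀T; simp only [Finset.mem_filter] at hk₀T; exact hk₀T.2.2.1
        set c := ⌊Real.logb q (2 * l)⌋₊ with hc
        have hsub : T ⊆ Finset.Icc k₀ (k₀ + c) := by
          intro j hj
          have hjk₀ : k₀ ≤ j := T.min'_le j hj
          have hjub : (m j : ℝ) < l * A := by
            rw [hT] at hj; simp only [Finset.mem_filter] at hj; exact hj.2.2.2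
          have h1 : q ^ (j - k₀) * (m k₀ : ℝ) ≤ m j := by
            have := hpow (j - k₀) k₀ hk₀1
            rwa [show k₀ + (j - k₀) = j by omega] at this
          have h2 : q ^ (j - k₀) < 2 * l := by
            by_contra hc2
            push_neg at hc2
            nlinarith
          have h3 : ((j - k₀ : ℕ) : ℝ) < Real.logb q (2 * l) := by
            have h4 := Real.logb_lt_logb hq (pow_pos hqpos _) h2
            rwa [Real.logb_pow, Real.logb_self_eq_one hq, mul_one] at h4
          have h5 : j - k₀ ≤ c := Nat.le_floor (le_of_lt h3)
          rw [Finset.mem_Icc]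
          omega
        have hcard : T.card ≤ c + 1 := by
          calc T.card ≤ (Finset.Icc k₀ (k₀ + c)).card := Finset.card_le_card hsub
            _ = c + 1 := by rw [Nat.card_Icc]; omega
        calc ((T.image m).card : ℝ) ≤ (T.card : ℝ) := by
              exact_mod_cast Finset.card_image_le
          _ ≤ (c : ℝ) + 1 := by exact_mod_cast hcard
          _ ≤ Real.logb q (2 * l) + 1 := by
              have := Nat.floor_le hlogb0
              rw [hc] at *
              linarith
  · -- A ≤ 0 case: no solutions
    refine ⟨∅, ?_, ?_⟩
    · intro k ε hdec hk1 hε hε0 hsum hratio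
      exfalso
      obtain ⟨hlo, _⟩ := hpart1 k ε hdec hk1 hε hε0 hsum hratio
      have h1 : (0:ℝ) < (m (k 0) : ℝ) := by exact_mod_cast hpos (k 0) (hk1 0 (by omega))
      have h2 : (0:ℝ) < (m (k 0) : ℝ) / l := div_pos h1 hlpos
      have h3 : (0:ℝ) < (A:ℝ) := lt_trans h2 hlo
      have : (0:ℤ) < A := by exact_mod_cast h3
      omega
    · simp
      have hlogb0 : 0 ≤ Real.logb q (2 * l) := by
        apply Real.logb_nonneg hq
        have : (2:ℝ) ≤ l := by exact_mod_cast hl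
        linarith
      linarith
end
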